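/- Let Q be the smallest face of P_a containing v_j for all j in some index set J, and suppose there exist λ_j ≥ 0 with Σλ_j = 1 such that Σ_{j∈J} λ_j v_j lies in the relative interior of Q. Then for every v ∈ Γ_a ∩ Q, the vector v − Σ_{j∈J} λ_j v_j lies in the convex cone generated by {v − v_j : j ∈ J}, and the convex cone generated by {w − Σ_{j∈J} λ_j v_j : w ∈ Γ_a ∩ Q} equals its linear span. -/

import Mathlib

open Set

namespace BS

def toR {n : ℕ} (u : Fin n → ℤ) : Fin n → ℝ := fun i => (u i : ℝ)

def natR {n : ℕ} (u : Fin n → ℕ) : Fin n → ℝ := fun i => (u i : ℝ)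

def natZ {n : ℕ} (u : Fin n → ℕ) : Fin n → ℤ := fun i => (u i : ℤ)

/-- `Γ` is the exponent set of a nonzero monomial ideal. -/
def IsMonIdeal {n : ℕ} (Γ : Set (Fin n → ℕ)) : Prop :=
  Γ.Nonempty ∧ ∀ u ∈ Γ, ∀ w : Fin n → ℕ, u + w ∈ Γ

/-- The Newton polyhedron: convex hull of the exponent set. -/
def newton {n : ℕ} (Γ : Set (Fin n → ℕ)) : Set (Fin n → ℝ) :=
  convexHull ℝ (natR '' Γ)

/-- The subsemigroup (containing 0) of ℤⁿ generated by differences u - v,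
u ∈ Γ, v ∈ Γ ∩ Q. -/
def diffMonoid {n : ℕ} (Γ : Set (Fin n → ℕ)) (Q : Set (Fin n → ℝ)) :
    AddSubmonoid (Fin n → ℤ) :=
  AddSubmonoid.closure {d | ∃ u ∈ Γ, ∃ v ∈ Γ, natR v ∈ Q ∧ d = natZ u - natZ v}

/-- M_Q : the translate by e = (1,...,1) of the difference semigroup. -/
def MQ {n : ℕ} (Γ : Set (Fin n → ℕ)) (Q : Set (Fin n → ℝ)) : Set (Fin n → ℤ) :=
  {m | m - 1 ∈ diffMonoid Γ Q}

/-- M_Q^{(k)} = k·v₀ + M_Q. -/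
def MQk {n : ℕ} (Γ : Set (Fin n → ℕ)) (Q : Set (Fin n → ℝ)) (v0 : Fin n → ℕ) (k : ℕ) :
    Set (Fin n → ℤ) :=
  {m | m - (k : ℤ) • natZ v0 ∈ MQ Γ Q}

/-- V_Q : linear span of the face Q. -/
def VQ {n : ℕ} (Q : Set (Fin n → ℝ)) : Submodule ℝ (Fin n → ℝ) := Submodule.span ℝ Q

/-- R_Q = { -L_Q(u) : u ∈ (M_Q \ M_Q') ∩ V_Q }. -/
def RQ {n : ℕ} (Γ : Set (Fin n → ℕ)) (Q : Set (Fin n → ℝ)) (v0 : Fin n → ℕ)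
    (L : (Fin n → ℝ) →ₗ[ℝ] ℝ) : Set ℝ :=
  {x | ∃ u ∈ MQ Γ Q \ MQk Γ Q v0 1, toR u ∈ VQ Q ∧ x = - L (toR u)}

/-- Q is contained in some coordinate hyperplane. -/
def InCoordHyp {n : ℕ} (Q : Set (Fin n → ℝ)) : Prop := ∃ i, ∀ q ∈ Q, q i = 0

/-- The subgroup G_Q of ℤⁿ generated by differences of elements of Γ ∩ Q. -/
def diffGroup {n : ℕ} (Γ : Set (Fin n → ℕ)) (Q : Set (Fin n → ℝ)) :
    AddSubgroup (Fin n → ℤ) :=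
  AddSubgroup.closure
    {d | ∃ u ∈ Γ, natR u ∈ Q ∧ ∃ v ∈ Γ, natR v ∈ Q ∧ d = natZ u - natZ v}

end BS

namespace BS
/-- x lies in the convex cone generated by D. -/
def InCone {n : ℕ} (D : Set (Fin n → ℝ)) (x : Fin n → ℝ) : Prop :=
  ∃ (s : Finset (Fin n → ℝ)) (c : (Fin n → ℝ) → ℝ),
    (↑s : Set (Fin n → ℝ)) ⊆ D ∧ (∀ y, 0 ≤ c y) ∧ x = ∑ y ∈ s, c y • y
end BS

namespace SFC

lemma incone_of_sum {n : ℕ} {ι : Type*} (D : Set (Fin n → ℝ)) (t : Finset ι)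
    (f : ι → (Fin n → ℝ)) (c : ι → ℝ) (hf : ∀ i ∈ t, f i ∈ D) (hc : ∀ i ∈ t, 0 ≤ c i) :
    BS.InCone D (∑ i ∈ t, c i • f i) := by
  classical
  refine ⟨t.image f, fun y => ∑ i ∈ t.filter (fun i => f i = y), c i, ?_, ?_, ?_⟩
  · intro y hy
    obtain ⟨i, hi, rfl⟩ := Finset.mem_image.mp hy
    exact hf i hi
  · intro y
    exact Finset.sum_nonneg fun i hi => hc i (Finset.mem_filter.mp hi).1
  · rw [eq_comm,
      ← Finset.sum_fiberwise_of_maps_to (fun i hi => Finset.mem_image_of_mem f hi)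
        (fun i => c i • f i)]
    refine Finset.sum_congr rfl fun y _ => ?_
    rw [Finset.sum_smul]
    exact Finset.sum_congr rfl fun i hi => by rw [(Finset.mem_filter.mp hi).2]

lemma incone_zero {n : ℕ} (D : Set (Fin n → ℝ)) : BS.InCone D 0 := by
  simpa using incone_of_sum D (∅ : Finset ℕ) (fun _ => 0) (fun _ => 0) (by simp) (by simp)

lemma incone_mem {n : ℕ} {D : Set (Fin n → ℝ)} {d : Fin n → ℝ} (hd : d ∈ D) :
    BS.InCone D d := by
  simpa using incone_of_sum D ({0} : Finset ℕ) (fun _ => d) (fun _ => 1)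
    (by simpa using hd) (by simp)

lemma incone_add {n : ℕ} {D : Set (Fin n → ℝ)} {x y : Fin n → ℝ}
    (hx : BS.InCone D x) (hy : BS.InCone D y) : BS.InCone D (x + y) := by
  obtain ⟨s1, c1, hs1, hc1, rfl⟩ := hx
  obtain ⟨s2, c2, hs2, hc2, rfl⟩ := hy
  have := incone_of_sum D (s1.disjSum s2) (Sum.elim id id) (Sum.elim c1 c2)
    (by rintro (i | i) hi
        · exact hs1 (Finset.inl_mem_disjSum.mp hi)
        · exact hs2 (Finset.inr_mem_disjSum.mp hi))
    (by rintro (i | i) _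
        · exact hc1 i
        · exact hc2 i)
  simpa [Finset.sum_disjSum] using this

lemma incone_smul {n : ℕ} {D : Set (Fin n → ℝ)} {x : Fin n → ℝ} {a : ℝ}
    (ha : 0 ≤ a) (hx : BS.InCone D x) : BS.InCone D (a • x) := by
  obtain ⟨s, c, hs, hc, rfl⟩ := hx
  have := incone_of_sum D s id (fun y => a * c y) (fun y hy => hs hy)
    (fun y _ => mul_nonneg ha (hc y))
  simpa [Finset.smul_sum, mul_smul] using this

lemma incone_sum {n : ℕ} {D : Set (Fin n → ℝ)} {ι : Type*} (t : Finset ι)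
    (g : ι → (Fin n → ℝ)) (h : ∀ i ∈ t, BS.InCone D (g i)) :
    BS.InCone D (∑ i ∈ t, g i) := by
  classical
  induction t using Finset.induction_on with
  | empty => simpa using incone_zero D
  | insert _ _ hni ih =>
    rw [Finset.sum_insert hni]
    exact incone_add (h _ (Finset.mem_insert_self _ _))
      (ih fun i hi => h i (Finset.mem_insert_of_mem hi))

lemma relint_push {n : ℕ} {Q : Set (Fin n → ℝ)} {b w : Fin n → ℝ}
    (hb : b ∈ intrinsicInterior ℝ Q) (hw : w ∈ Q) :
    ∃ ε : ℝ, 0 < ε ∧ b + ε • (b - w) ∈ Q := by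
  obtain ⟨b', hb', hbeq⟩ := mem_intrinsicInterior.mp hb
  obtain ⟨U, hUopen, hUeq⟩ := isOpen_induced_iff.mp
    (isOpen_interior (s := (Subtype.val ⁻¹' Q : Set (affineSpan ℝ Q))))
  have hbU : b ∈ U := by
    rw [← hUeq] at hb'
    exact hbeq ▸ hb'
  have hUQ : ∀ x ∈ U, x ∈ affineSpan ℝ Q → x ∈ Q := by
    intro x hxU hxs
    have hx2 : (⟨x, hxs⟩ : affineSpan ℝ Q) ∈ (Subtype.val ⁻¹' U : Set (affineSpan ℝ Q)) := hxU
    rw [hUeq] at hx2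
    have hx3 : (⟨x, hxs⟩ : affineSpan ℝ Q) ∈ (Subtype.val ⁻¹' Q : Set (affineSpan ℝ Q)) :=
      interior_subset hx2
    exact hx3
  have hcont : Continuous fun ε : ℝ => b + ε • (b - w) :=
    continuous_const.add (continuous_id.smul continuous_const)
  have hopen : IsOpen ((fun ε : ℝ => b + ε • (b - w)) ⁻¹' U) := hUopen.preimage hcont
  have h0 : (0 : ℝ) ∈ (fun ε : ℝ => b + ε • (b - w)) ⁻¹' U := by simp [hbU]
  obtain ⟨δ, hδ, hball⟩ := Metric.isOpen_iff.mp hopen 0 h0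
  refine ⟨δ / 2, by positivity, ?_⟩
  have hmem : b + (δ / 2) • (b - w) ∈ U := by
    apply hball
    simp only [Metric.mem_ball, Real.dist_eq, sub_zero]
    rw [abs_of_pos (by positivity)]
    linarith
  have hbs : b ∈ affineSpan ℝ Q := hbeq ▸ b'.2
  have hws : w ∈ affineSpan ℝ Q := subset_affineSpan ℝ Q hw
  have hspan : b + (δ / 2) • (b - w) ∈ affineSpan ℝ Q := by
    have := AffineSubspace.smul_vsub_vadd_mem (affineSpan ℝ Q) (δ / 2) hbs hws hbs
    simpa [vsub_eq_sub, vadd_eq_add, add_comm] using this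
  exact hUQ _ hmem hspan

end SFC

/-- Step 6 geometry: if Σ λⱼ vⱼ lies in the relative interior of the smallest face Q
containing the vⱼ, j ∈ J, then every w - Σ λⱼ vⱼ (w ∈ Γ ∩ Q) lies in the cone
generated by the w - vⱼ, and the cone generated by {w - Σ λⱼ vⱼ : w ∈ Γ ∩ Q}
equals its linear span. -/
theorem smallest_face_cone {n r : ℕ} (v : Fin r → (Fin n → ℕ))
    (J : Finset (Fin r)) (Q : Set (Fin n → ℝ))
    (hface : IsExposed ℝ (BS.newton {u : Fin n → ℕ | ∃ j, ∀ i, v j i ≤ u i}) Q)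
    (hvQ : ∀ j ∈ J, BS.natR (v j) ∈ Q)
    (hmin : ∀ F : Set (Fin n → ℝ),
      IsExposed ℝ (BS.newton {u : Fin n → ℕ | ∃ j, ∀ i, v j i ≤ u i}) F →
      (∀ j ∈ J, BS.natR (v j) ∈ F) → Q ⊆ F)
    (lam : Fin r → ℝ) (hlam0 : ∀ j, 0 ≤ lam j) (hlamJ : ∀ j ∉ J, lam j = 0)
    (hsum : ∑ j, lam j = 1)
    (hint : (∑ j, lam j • BS.natR (v j)) ∈ intrinsicInterior ℝ Q) :
    (∀ w ∈ {u : Fin n → ℕ | ∃ j, ∀ i, v j i ≤ u i}, BS.natR w ∈ Q →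
      BS.InCone {d | ∃ j ∈ J, d = BS.natR w - BS.natR (v j)}
        (BS.natR w - ∑ j, lam j • BS.natR (v j))) ∧
    (∀ x : Fin n → ℝ,
      x ∈ Submodule.span ℝ {d | ∃ w ∈ {u : Fin n → ℕ | ∃ j, ∀ i, v j i ≤ u i},
          BS.natR w ∈ Q ∧ d = BS.natR w - ∑ j, lam j • BS.natR (v j)} ↔
      BS.InCone {d | ∃ w ∈ {u : Fin n → ℕ | ∃ j, ∀ i, v j i ≤ u i},
          BS.natR w ∈ Q ∧ d = BS.natR w - ∑ j, lam j • BS.natR (v j)} x) := by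
    classical
  set Γ : Set (Fin n → ℕ) := {u : Fin n → ℕ | ∃ j, ∀ i, v j i ≤ u i} with hG
  set b : Fin n → ℝ := ∑ j, lam j • BS.natR (v j) with hbdef
  have hident : ∀ w : Fin n → ℕ,
      BS.natR w - b = ∑ j ∈ J, lam j • (BS.natR w - BS.natR (v j)) := by
    intro w
    have h1 : ∑ j ∈ J, lam j • (BS.natR w - BS.natR (v j))
        = ∑ j, lam j • (BS.natR w - BS.natR (v j)) := by
      apply Finset.sum_subset (Finset.subset_univ J)
      intro j _ hj
      rw [hlamJ j hj, zero_smul]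
    rw [h1]
    simp_rw [smul_sub]
    rw [Finset.sum_sub_distrib, ← Finset.sum_smul, hsum, one_smul, hbdef]
  constructor
  · intro w _ _
    rw [hident w]
    exact SFC.incone_of_sum _ J (fun j => BS.natR w - BS.natR (v j)) lam
      (fun j hj => ⟨j, hj, rfl⟩) (fun j _ => hlam0 j)
  · set D2 : Set (Fin n → ℝ) := {d | ∃ w ∈ Γ, BS.natR w ∈ Q ∧ d = BS.natR w - b} with hD2
    have hbQ : b ∈ Q := intrinsicInterior_subset hint
    obtain ⟨l, hQeq⟩ := hface ⟨b, hbQ⟩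
    have hneg : ∀ d ∈ D2, BS.InCone D2 (-d) := by
      rintro d ⟨w, hwG, hwQ, rfl⟩
      obtain ⟨ε, hε, hq⟩ := SFC.relint_push hint hwQ
      set q := b + ε • (b - BS.natR w) with hqdef
      have hqP : q ∈ BS.newton Γ := hface.subset hq
      rw [BS.newton, convexHull_eq] at hqP
      obtain ⟨ι, t, wt, z, hw0, hw1, hz, hcm⟩ := hqP
      rw [Finset.centerMass_eq_of_sum_1 _ _ hw1] at hcm
      set t' := t.filter (fun i => 0 < wt i) with ht'
      have hz0 : ∀ i ∈ t, ¬ 0 < wt i → wt i = 0 :=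
        fun i hi h => le_antisymm (not_lt.mp h) (hw0 i hi)
      have hcm' : ∑ i ∈ t', wt i • z i = q := by
        rw [← hcm]
        apply Finset.sum_filter_of_ne
        intro i hi hne
        by_contra h
        exact hne (by rw [hz0 i hi h, zero_smul])
      have hw1' : ∑ i ∈ t', wt i = 1 := by
        rw [← hw1]
        apply Finset.sum_filter_of_ne
        intro i hi hne
        by_contra h
        exact hne (hz0 i hi h)
      have hqmax : ∀ y ∈ BS.newton Γ, l y ≤ l q := by
        have h := hq
        rw [hQeq] at h
        exact h.2
      have hzQ : ∀ i ∈ t', z i ∈ Q := by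
        intro i hi
        have hit : i ∈ t := (Finset.mem_filter.mp hi).1
        have hpos : 0 < wt i := (Finset.mem_filter.mp hi).2
        have hziP : z i ∈ BS.newton Γ := subset_convexHull ℝ _ (hz i hit)
        have hle : l (z i) ≤ l q := hqmax _ hziP
        have heq : l (z i) = l q := by
          by_contra hne
          have hlt : l (z i) < l q := lt_of_le_of_ne hle hne
          have hstrict : ∑ i ∈ t', wt i * l (z i) < ∑ i ∈ t', wt i * l q := by
            apply Finset.sum_lt_sum
            · intro j hj
              exact mul_le_mul_of_nonneg_left
                (hqmax _ (subset_convexHull ℝ _ (hz j (Finset.mem_filter.mp hj).1)))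
                (le_of_lt (Finset.mem_filter.mp hj).2)
            · exact ⟨i, hi, mul_lt_mul_of_pos_left hlt hpos⟩
          have hLq : l q = ∑ i ∈ t', wt i * l (z i) := by
            rw [← hcm', map_sum]
            exact Finset.sum_congr rfl fun j _ => by rw [map_smul, smul_eq_mul]
          rw [← Finset.sum_mul, hw1', one_mul] at hstrict
          rw [hLq] at hstrict
          exact lt_irrefl _ hstrict
        rw [hQeq]
        exact ⟨hziP, fun y hy => le_of_le_of_eq (hqmax y hy) heq.symm⟩
      have hkey : -(BS.natR w - b) = ∑ i ∈ t', (ε⁻¹ * wt i) • (z i - b) := by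
        have h1 : ∑ i ∈ t', wt i • (z i - b) = q - b := by
          simp_rw [smul_sub]
          rw [Finset.sum_sub_distrib, hcm', ← Finset.sum_smul, hw1', one_smul]
        have h2 : q - b = ε • (b - BS.natR w) := by
          rw [hqdef, add_sub_cancel_left]
        calc -(BS.natR w - b) = b - BS.natR w := by rw [neg_sub]
          _ = ε⁻¹ • (ε • (b - BS.natR w)) := by
              rw [smul_smul, inv_mul_cancel₀ (ne_of_gt hε), one_smul]
          _ = ε⁻¹ • (q - b) := by rw [h2]
          _ = ε⁻¹ • ∑ i ∈ t', wt i • (z i - b) := by rw [h1]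
          _ = ∑ i ∈ t', (ε⁻¹ * wt i) • (z i - b) := by
              rw [Finset.smul_sum]
              exact Finset.sum_congr rfl fun i _ => by rw [smul_smul]
      rw [hkey]
      apply SFC.incone_of_sum
      · intro i hi
        obtain ⟨u, hu, hzu⟩ := hz i (Finset.mem_filter.mp hi).1
        exact ⟨u, hu, by rw [hzu]; exact hzQ i hi, by rw [hzu]⟩
      · intro i hi
        exact mul_nonneg (inv_nonneg.mpr hε.le) (hw0 i (Finset.mem_filter.mp hi).1)
    have hnegc : ∀ x, BS.InCone D2 x → BS.InCone D2 (-x) := by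
      rintro x ⟨s, c, hs, hc, rfl⟩
      have h : -(∑ y ∈ s, c y • y) = ∑ y ∈ s, c y • (-y) := by
        rw [← Finset.sum_neg_distrib]
        exact Finset.sum_congr rfl fun y _ => (smul_neg _ _).symm
      rw [h]
      exact SFC.incone_sum s _ fun y hy => SFC.incone_smul (hc y) (hneg y (hs hy))
    intro x
    constructor
    · intro hx
      induction hx using Submodule.span_induction with
      | mem d hd => exact SFC.incone_mem hd
      | zero => exact SFC.incone_zero _
      | add x y _ _ hx hy => exact SFC.incone_add hx hy
      | smul a x _ hx =>
        rcases le_or_gt 0 a with ha | ha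
        · exact SFC.incone_smul ha hx
        · have h := SFC.incone_smul (a := -a) (by linarith) (hnegc _ hx)
          simpa using h
    · rintro ⟨s, c, hs, hc, rfl⟩
      exact Submodule.sum_mem _ fun y hy =>
        Submodule.smul_mem _ _ (Submodule.subset_span (hs hy))
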